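/- Let h > 31, let a₁, …, a_h ∈ ℝⁿ and b₁, …, b_h ∈ ℝ with b_i < 0 for all i, and suppose ω ∈ ℝⁿ satisfies ‖ω‖ < 1, ⟨a_i, ω⟩ > b_i for all i, and the analytic-centre equation Σ_{i=1}^{h} a_i/(⟨a_i, ω⟩ − b_i) = 2ω/(1 − ‖ω‖²). Define the Hessian quadratic form H(v) := Σ_{i=1}^{h} ⟨a_i, v⟩²/(⟨a_i, ω⟩ − b_i)² + 4⟨ω, v⟩²/(1 − ‖ω‖²)² + 2‖v‖²/(1 − ‖ω‖²). Then every x ∈ ℝⁿ with ‖x‖ ≤ 1 and ⟨a_i, x⟩ ≥ b_i for all i satisfies H(x − ω) ≤ 14·h²; that is, the search region P is contained in the Hessian ellipsoid E(∇²F(ω), ω, √14·h). -/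

import Mathlib

open scoped RealInnerProductSpace

private lemma aux_div (p q c : ℝ) (h : q - c ≠ 0) :
    (q - c)⁻¹ * (p - q) = (p - c) / (q - c) - 1 := by
  field_simp
  ring

private lemma aux_div_sq (p q c : ℝ) (h : q - c ≠ 0) :
    (p - q) ^ 2 / (q - c) ^ 2 = ((p - c) / (q - c) - 1) ^ 2 := by
  rw [div_sub' h, div_pow]
  congr 1
  ring

private lemma aux_sq_div (A w c : ℝ) (hA : A ≠ 0) (h : 2 * w = A * c) :
    4 * w ^ 2 / A ^ 2 = c ^ 2 := by
  have h4 : 4 * w ^ 2 = A ^ 2 * c ^ 2 := by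
    rw [show (4:ℝ) * w ^ 2 = (2 * w) ^ 2 by ring, h, mul_pow]
  rw [h4]
  field_simp

set_option maxHeartbeats 1600000 in
/-- For `h > 31` cuts with negative offsets, the search region `P` is contained in the
Hessian ellipsoid `E(∇²F(ω), ω, √14·h)` about the analytic centre `ω`: every `x ∈ P`
satisfies `(x−ω)ᵀ∇²F(ω)(x−ω) ≤ 14·h²`. -/
theorem search_region_in_hessian_ellipsoid (n h : ℕ) (hh : 31 < h)
    (a : Fin h → EuclideanSpace ℝ (Fin n)) (b : Fin h → ℝ) (hb : ∀ i, b i < 0)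
    (ω : EuclideanSpace ℝ (Fin n)) (hω : ‖ω‖ < 1)
    (hωi : ∀ i, b i < ⟪a i, ω⟫)
    (hceq : ∑ i, (⟪a i, ω⟫ - b i)⁻¹ • a i = (2 / (1 - ‖ω‖ ^ 2)) • ω)
    (x : EuclideanSpace ℝ (Fin n)) (hx : ‖x‖ ≤ 1) (hxi : ∀ i, b i ≤ ⟪a i, x⟫) :
    (∑ i, ⟪a i, x - ω⟫ ^ 2 / (⟪a i, ω⟫ - b i) ^ 2)
      + 4 * ⟪ω, x - ω⟫ ^ 2 / (1 - ‖ω‖ ^ 2) ^ 2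
      + 2 * ‖x - ω‖ ^ 2 / (1 - ‖ω‖ ^ 2) ≤ 14 * (h : ℝ) ^ 2 := by
  have hA : (0:ℝ) < 1 - ‖ω‖ ^ 2 := by nlinarith [norm_nonneg ω]
  have hs : ∀ i, 0 < ⟪a i, ω⟫ - b i := fun i => sub_pos.2 (hωi i)
  set u : Fin h → ℝ := fun i => (⟪a i, x⟫ - b i) / (⟪a i, ω⟫ - b i) with hu
  have hu0 : ∀ i, 0 ≤ u i := fun i => div_nonneg (sub_nonneg.2 (hxi i)) (hs i).le
  set S : ℝ := ∑ i, u i with hS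
  have hS0 : 0 ≤ S := Finset.sum_nonneg fun i _ => hu0 i
  have hx2 : ‖x‖ ^ 2 ≤ 1 := by nlinarith [norm_nonneg x]
  -- inner product of the centre equation with x - ω
  have hkey : S - h = (2 / (1 - ‖ω‖ ^ 2)) * ⟪ω, x - ω⟫ := by
    have h1 := congrArg (fun y : EuclideanSpace ℝ (Fin n) => ⟪y, x - ω⟫) hceq
    simp only [sum_inner, real_inner_smul_left] at h1
    have h2 : ∀ i, (⟪a i, ω⟫ - b i)⁻¹ * ⟪a i, x - ω⟫ = u i - 1 := by
      intro i
      rw [inner_sub_right, aux_div _ _ _ (hs i).ne']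
    rw [Finset.sum_congr rfl fun i _ => h2 i, Finset.sum_sub_distrib] at h1
    simpa using h1
  have hωv : 2 * ⟪ω, x - ω⟫ = (1 - ‖ω‖ ^ 2) * (S - h) := by
    rw [hkey]; field_simp
  have hinner : ⟪ω, x - ω⟫ = ⟪ω, x⟫ - ‖ω‖ ^ 2 := by
    rw [inner_sub_right, real_inner_self_eq_norm_sq]
  have hCS : 2 * ⟪ω, x⟫ ≤ ‖ω‖ ^ 2 + ‖x‖ ^ 2 := by
    nlinarith [real_inner_le_norm ω x, sq_nonneg (‖ω‖ - ‖x‖)]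
  have hSub : S ≤ h + 1 := by
    have h3 : (1 - ‖ω‖ ^ 2) * (S - h) ≤ 1 - ‖ω‖ ^ 2 := by
      rw [← hωv, hinner]; linarith
    nlinarith
  -- term 1
  have hterm1 : (∑ i, ⟪a i, x - ω⟫ ^ 2 / (⟪a i, ω⟫ - b i) ^ 2)
      ≤ S ^ 2 - 2 * S + h := by
    have heq : ∀ i, ⟪a i, x - ω⟫ ^ 2 / (⟪a i, ω⟫ - b i) ^ 2 = (u i - 1) ^ 2 := by
      intro i
      rw [inner_sub_right, aux_div_sq _ _ _ (hs i).ne']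
    rw [Finset.sum_congr rfl fun i _ => heq i]
    have hsq : ∑ i, (u i) ^ 2 ≤ S ^ 2 :=
      Finset.sum_sq_le_sq_sum_of_nonneg fun i _ => hu0 i
    have hexp : ∑ i, (u i - 1) ^ 2 = (∑ i, (u i) ^ 2) - 2 * S + h := by
      rw [Finset.sum_congr rfl fun (i : Fin h) _ =>
        (by ring : (u i - 1) ^ 2 = (u i) ^ 2 - 2 * u i + 1)]
      rw [Finset.sum_add_distrib, Finset.sum_sub_distrib, ← Finset.mul_sum]
      simp [hS]
    rw [hexp]
    linarith
  -- term 2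
  have hterm2 : 4 * ⟪ω, x - ω⟫ ^ 2 / (1 - ‖ω‖ ^ 2) ^ 2 = (S - h) ^ 2 :=
    aux_sq_div _ _ _ hA.ne' hωv
  -- term 3
  have hterm3 : 2 * ‖x - ω‖ ^ 2 / (1 - ‖ω‖ ^ 2) ≤ 2 * (1 - (S - h)) := by
    rw [div_le_iff₀ hA]
    have hnv : ‖x - ω‖ ^ 2 = ‖x‖ ^ 2 - 2 * ⟪x, ω⟫ + ‖ω‖ ^ 2 := by
      exact norm_sub_sq_real x ω
    have hsymm : ⟪ω, x⟫ = ⟪x, ω⟫ := real_inner_comm x ω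
    have h5 : (1 - ‖ω‖ ^ 2) * (1 - (S - h)) = 1 - ‖ω‖ ^ 2 - 2 * ⟪ω, x - ω⟫ := by
      rw [hωv]; ring
    rw [hinner, hsymm] at h5
    nlinarith
  have hh' : (32:ℝ) ≤ (h:ℝ) := by exact_mod_cast hh
  nlinarith [hterm1, hterm2, hterm3, hS0, hSub, sq_nonneg (S - h)]
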